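/- Let Q ⊂ ℝ^n be a full-dimensional simplicial convex polytope with 0 in its interior, with weight function a : V(Q) → ℝ_{>0}. Then ε_Q · (|V(Q)| − n) ≤ Σ_{u∈V(Q)} a(u). -/

import Mathlib

open Matrix

/-- The polar dual `Q* = {v | ⟨v,u⟩ ≥ -1 for all u ∈ Q}`. -/
def polarDual {n : ℕ} (Q : Set (Fin n → ℝ)) : Set (Fin n → ℝ) :=
  {v | ∀ u ∈ Q, -1 ≤ v ⬝ᵥ u}

/-- The set of numbers `a(u)(1 + ⟨v,u⟩)` for `u ∈ V(Q)`, `v ∈ V(Q*)`, `u ∉ F_v`;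
`ε_Q` is its minimum. -/
def epsSet {n : ℕ} (VQ VQd : Finset (Fin n → ℝ)) (a : (Fin n → ℝ) → ℝ) : Set ℝ :=
  {x | ∃ u ∈ VQ, ∃ v ∈ VQd, v ⬝ᵥ u ≠ -1 ∧ x = a u * (1 + v ⬝ᵥ u)}

private lemma finsetSum_dotProduct {k : ℕ} {ι : Type*} (s : Finset ι)
    (f : ι → (Fin k → ℝ)) (w : Fin k → ℝ) :
    (∑ i ∈ s, f i) ⬝ᵥ w = ∑ i ∈ s, f i ⬝ᵥ w := by
  simp only [dotProduct, Finset.sum_apply, Finset.sum_mul]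
  exact Finset.sum_comm

private lemma dotProduct_finsetSum {k : ℕ} {ι : Type*} (s : Finset ι)
    (f : ι → (Fin k → ℝ)) (w : Fin k → ℝ) :
    w ⬝ᵥ (∑ i ∈ s, f i) = ∑ i ∈ s, w ⬝ᵥ f i := by
  simp only [dotProduct, Finset.sum_apply, Finset.mul_sum]
  exact Finset.sum_comm

/-- For a full-dimensional simplicial polytope `Q` with `0` in its interior
and weight function `a`, one has `ε_Q · (|V(Q)| - n) ≤ Σ_{u ∈ V(Q)} a(u)`. -/
theorem eps_card_inequality {n : ℕ} (hn : 1 ≤ n)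
    (VQ VQd : Finset (Fin n → ℝ))
    -- `VQ` is the vertex set of the polytope `Q = conv(VQ)`
    (hVQ : (VQ : Set (Fin n → ℝ)) =
      Set.extremePoints ℝ (convexHull ℝ (VQ : Set (Fin n → ℝ))))
    -- `0` lies in the interior of `Q` (in particular `Q` is full-dimensional)
    (h0 : (0 : Fin n → ℝ) ∈ interior (convexHull ℝ (VQ : Set (Fin n → ℝ))))
    -- `VQd` is the vertex set of the polar dual `Q*`
    (hVQd : (VQd : Set (Fin n → ℝ)) =
      Set.extremePoints ℝ (polarDual (convexHull ℝ (VQ : Set (Fin n → ℝ)))))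
    -- `Q` is simplicial: every facet has exactly `n` vertices
    (hsimp : ∀ v ∈ VQd, (VQ.filter fun u => v ⬝ᵥ u = -1).card = n)
    -- the weight function `a : V(Q) → ℝ_{>0}`
    (a : (Fin n → ℝ) → ℝ) (ha : ∀ u ∈ VQ, 0 < a u)
    -- `ε` is the minimum `ε_Q`
    (ε : ℝ) (hε : IsLeast (epsSet VQ VQd a) ε) :
    ε * ((VQ.card : ℝ) - n) ≤ ∑ u ∈ VQ, a u := by
  set Q : Set (Fin n → ℝ) := convexHull ℝ (VQ : Set (Fin n → ℝ)) with hQ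
  set D : Set (Fin n → ℝ) := polarDual Q with hD
  -- D is convex
  have hDconv : Convex ℝ D := by
    intro x hx y hy s t hs ht hst u hu
    have h1 := hx u hu
    have h2 := hy u hu
    simp only [add_dotProduct, smul_dotProduct, smul_eq_mul]
    nlinarith [mul_le_mul_of_nonneg_left h1 hs, mul_le_mul_of_nonneg_left h2 ht]
  -- D is closed
  have hDclosed : IsClosed D := by
    have : D = ⋂ u ∈ Q, {v : Fin n → ℝ | -1 ≤ v ⬝ᵥ u} := by
      ext v; simp [hD, polarDual, Set.mem_iInter]
    rw [this]
    refine isClosed_biInter fun u _ => isClosed_le continuous_const ?_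
    simp only [dotProduct]
    exact continuous_finset_sum _ fun i _ => (continuous_apply i).mul continuous_const
  -- ball inside Q
  obtain ⟨r, hrpos, hball⟩ := Metric.isOpen_iff.mp isOpen_interior 0 h0
  have hballQ : Metric.ball (0 : Fin n → ℝ) r ⊆ Q :=
    hball.trans interior_subset
  -- D is bounded
  have hDbdd : Bornology.IsBounded D := by
    rw [isBounded_iff_forall_norm_le]
    refine ⟨2 / r, fun v hv => ?_⟩
    rcases eq_or_ne v 0 with rfl | hvne
    · simp; positivity
    · have hvpos : 0 < ‖v‖ := norm_pos_iff.mpr hvne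
      set t : ℝ := r / (2 * ‖v‖) with htdef
      have htpos : 0 < t := by positivity
      have hu : ((-t) • v) ∈ Metric.ball (0 : Fin n → ℝ) r := by
        rw [Metric.mem_ball, dist_zero_right, norm_smul]
        simp only [norm_neg, Real.norm_eq_abs, abs_of_pos htpos]
        rw [htdef]
        rw [div_mul_eq_mul_div, mul_comm, mul_div_assoc]
        calc ‖v‖ * (r / (2 * ‖v‖)) = r / 2 := by field_simp
        _ < r := by linarith
      have hle : -1 ≤ v ⬝ᵥ ((-t) • v) := hv _ (hballQ hu)
      rw [dotProduct_smul] at hle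
      have hvv : 0 ≤ v ⬝ᵥ v := Finset.sum_nonneg fun i _ => mul_self_nonneg _
      -- ‖v‖^2 ≤ v ⬝ᵥ v
      have hsq : ‖v‖ ^ 2 ≤ v ⬝ᵥ v := by
        have hnorm : ‖v‖ ≤ Real.sqrt (v ⬝ᵥ v) := by
          rw [pi_norm_le_iff_of_nonneg (Real.sqrt_nonneg _)]
          intro i
          rw [Real.norm_eq_abs, ← Real.sqrt_sq_eq_abs]
          refine Real.sqrt_le_sqrt ?_
          have := Finset.single_le_sum (f := fun j => v j * v j)
            (fun j _ => mul_self_nonneg (v j)) (Finset.mem_univ i)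
          simpa [sq, dotProduct] using this
        calc ‖v‖ ^ 2 ≤ Real.sqrt (v ⬝ᵥ v) ^ 2 :=
              pow_le_pow_left₀ (norm_nonneg _) hnorm 2
          _ = v ⬝ᵥ v := Real.sq_sqrt hvv
      -- conclude
      have h1 : t * (v ⬝ᵥ v) ≤ 1 := by
        rw [smul_eq_mul] at hle; linarith
      have h2 : t * ‖v‖ ^ 2 ≤ 1 := le_trans (by nlinarith) h1
      rw [htdef, div_mul_eq_mul_div, div_le_one (by positivity)] at h2
      rw [le_div_iff₀ hrpos]
      nlinarith [hvpos]
  have hDcomp : IsCompact D := Metric.isCompact_iff_isClosed_bounded.mpr ⟨hDclosed, hDbdd⟩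
  -- D = convexHull of VQd
  have hDhull : D = convexHull ℝ (VQd : Set (Fin n → ℝ)) := by
    have h1 := closure_convexHull_extremePoints hDcomp hDconv
    rw [← hVQd] at h1
    rw [← h1, (VQd.finite_toSet.isClosed_convexHull (𝕜 := ℝ)).closure_eq]
  -- 0 ∈ D
  have h0D : (0 : Fin n → ℝ) ∈ D := fun u _ => by
    rw [zero_dotProduct]; norm_num
  -- the weighted vertex sum
  set w : Fin n → ℝ := ∑ u ∈ VQ, a u • u with hw
  -- there is a vertex of D with v₀ ⬝ᵥ w ≤ 0
  obtain ⟨v₀, hv₀, hv₀w⟩ : ∃ v₀ ∈ VQd, v₀ ⬝ᵥ w ≤ 0 := by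
    rw [hDhull, Finset.convexHull_eq] at h0D
    obtain ⟨lam, hl0, hl1, hc⟩ := h0D
    rw [Finset.centerMass_eq_of_sum_1 _ _ hl1] at hc
    by_contra hcon
    push_neg at hcon
    -- all v ⬝ᵥ w > 0 on VQd; but the lam-combination of v's is 0
    have h1 : ∑ v ∈ VQd, lam v * (v ⬝ᵥ w) = 0 := by
      have h := congrArg (fun x => x ⬝ᵥ w) hc
      simp only [zero_dotProduct, id] at h
      rw [finsetSum_dotProduct] at h
      simpa [smul_dotProduct] using h
    obtain ⟨v, hvmem, hvpos⟩ : ∃ v ∈ VQd, 0 < lam v := by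
      by_contra hall
      push_neg at hall
      have : ∑ v ∈ VQd, lam v = 0 :=
        Finset.sum_eq_zero fun v hv => le_antisymm (hall v hv) (hl0 v hv)
      rw [hl1] at this; norm_num at this
    have hpos : 0 < ∑ v ∈ VQd, lam v * (v ⬝ᵥ w) := by
      refine Finset.sum_pos' (fun x hx => mul_nonneg (hl0 x hx) (hcon x hx).le)
        ⟨v, hvmem, mul_pos hvpos (hcon v hvmem)⟩
    linarith
  -- v₀ ⬝ᵥ u ≥ -1 for all u ∈ VQ
  have hv₀D : v₀ ∈ D := by
    have : (VQd : Set (Fin n → ℝ)) ⊆ D := hVQd ▸ extremePoints_subset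
    exact this hv₀
  have hge : ∀ u ∈ VQ, -1 ≤ v₀ ⬝ᵥ u := fun u hu =>
    hv₀D u (subset_convexHull ℝ _ hu)
  -- split VQ by the facet
  set F := VQ.filter (fun u => v₀ ⬝ᵥ u = -1) with hF
  set G := VQ.filter (fun u => ¬ (v₀ ⬝ᵥ u = -1)) with hG
  have hFcard : F.card = n := hsimp v₀ hv₀
  have hcards : F.card + G.card = VQ.card := Finset.card_filter_add_card_filter_not _
  have hGcard : (G.card : ℝ) = (VQ.card : ℝ) - n := by
    have := hcards
    rw [hFcard] at this
    push_cast [← this]; ring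
  -- main chain
  have step1 : ε * ((VQ.card : ℝ) - n) = ∑ _u ∈ G, ε := by
    rw [Finset.sum_const, nsmul_eq_mul, ← hGcard]; ring
  have step2 : ∑ _u ∈ G, ε ≤ ∑ u ∈ G, a u * (1 + v₀ ⬝ᵥ u) := by
    refine Finset.sum_le_sum fun u hu => ?_
    rw [hG, Finset.mem_filter] at hu
    exact hε.2 ⟨u, hu.1, v₀, hv₀, hu.2, rfl⟩
  have step3 : ∑ u ∈ G, a u * (1 + v₀ ⬝ᵥ u) = ∑ u ∈ VQ, a u * (1 + v₀ ⬝ᵥ u) := by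
    rw [← Finset.sum_filter_add_sum_filter_not VQ (fun u => v₀ ⬝ᵥ u = -1)]
    have : ∑ u ∈ F, a u * (1 + v₀ ⬝ᵥ u) = 0 := by
      refine Finset.sum_eq_zero fun u hu => ?_
      rw [hF, Finset.mem_filter] at hu
      rw [hu.2]; ring
    rw [← hF, ← hG, this, zero_add]
  have step4 : ∑ u ∈ VQ, a u * (1 + v₀ ⬝ᵥ u) = (∑ u ∈ VQ, a u) + v₀ ⬝ᵥ w := by
    rw [hw, dotProduct_finsetSum, ← Finset.sum_add_distrib]
    refine Finset.sum_congr rfl fun u _ => ?_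
    rw [dotProduct_smul]
    simp [mul_add]
  calc ε * ((VQ.card : ℝ) - n) = ∑ _u ∈ G, ε := step1
    _ ≤ ∑ u ∈ G, a u * (1 + v₀ ⬝ᵥ u) := step2
    _ = ∑ u ∈ VQ, a u * (1 + v₀ ⬝ᵥ u) := step3
    _ = (∑ u ∈ VQ, a u) + v₀ ⬝ᵥ w := step4
    _ ≤ ∑ u ∈ VQ, a u := by linarith
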